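/- Let D = ℤ + Xℚ[X]. A nonzero nonunit a ∈ D can be written as a finite product of irreducible elements of D if and only if ord(a) = 0, i.e., if and only if the constant coefficient of a is nonzero. -/

import Mathlib

open Polynomial

/-- `D = ℤ + Xℚ[X]` : the subring of `ℚ[X]` of polynomials with integer constant
coefficient. -/
noncomputable def ZplusXQX : Subring (Polynomial ℚ) where
  carrier := {f | ∃ n : ℤ, f.coeff 0 = (n : ℚ)}
  zero_mem' := ⟨0, by simp⟩
  one_mem' := ⟨1, by simp⟩
  add_mem' := by
    rintro f g ⟨m, hm⟩ ⟨n, hn⟩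
    exact ⟨m + n, by simp [hm, hn]⟩
  mul_mem' := by
    rintro f g ⟨m, hm⟩ ⟨n, hn⟩
    exact ⟨m * n, by simp [Polynomial.mul_coeff_zero, hm, hn]⟩
  neg_mem' := by
    rintro f ⟨m, hm⟩
    exact ⟨-m, by simp [hm]⟩

lemma ZX_coe_mul (a b : ZplusXQX) : ((a*b : ZplusXQX) : ℚ[X]) = (a:ℚ[X]) * b := rfl
lemma ZX_coe_one : ((1 : ZplusXQX) : ℚ[X]) = 1 := rfl

lemma ZX_mem (a : ZplusXQX) : ∃ n : ℤ, (a:ℚ[X]).coeff 0 = (n:ℚ) := a.2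

lemma ZX_isUnit_iff (a : ZplusXQX) : IsUnit a ↔ ((a:ℚ[X]) = 1 ∨ (a:ℚ[X]) = -1) := by
  constructor
  · intro h
    obtain ⟨b, hab⟩ := isUnit_iff_exists_inv.mp h
    have hab' : (a:ℚ[X]) * (b:ℚ[X]) = 1 := by exact_mod_cast congrArg (Subtype.val) hab
    obtain ⟨n, hn⟩ := a.2
    obtain ⟨m, hm⟩ := b.2
    have h0 : (a:ℚ[X]).coeff 0 * (b:ℚ[X]).coeff 0 = 1 := by
      rw [← mul_coeff_zero, hab']; simp
    have hnm : (n : ℚ) * m = 1 := by rw [← hn, ← hm]; exact h0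
    have hnm' : n * m = 1 := by exact_mod_cast hnm
    have hun : IsUnit n := IsUnit.of_mul_eq_one _ hnm'
    obtain ⟨r, hr, hra⟩ := Polynomial.isUnit_iff.mp (IsUnit.of_mul_eq_one _ hab')
    have hrn : r = (n:ℚ) := by rw [← hn, ← hra]; simp
    rcases Int.isUnit_iff.mp hun with h1 | h1 <;> [left; right] <;>
      rw [← hra, hrn, h1] <;> simp
  · rintro (h | h)
    · exact IsUnit.of_mul_eq_one a (Subtype.ext (by rw [ZX_coe_mul, ZX_coe_one, h]; ring))
    · exact IsUnit.of_mul_eq_one a (Subtype.ext (by rw [ZX_coe_mul, ZX_coe_one, h]; ring))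

lemma ZX_irred_coeff0 (p : ZplusXQX) (hp : Irreducible p) : (p:ℚ[X]).coeff 0 ≠ 0 := by
  intro h0
  set q : ZplusXQX := ⟨Polynomial.C (1/2 : ℚ) * (p:ℚ[X]), ⟨0, by simp [h0]⟩⟩ with hq
  have h2 : ((2:ℤ):ℚ[X]) ∈ ZplusXQX := ⟨2, by simp⟩
  have hpq : p = (⟨((2:ℤ):ℚ[X]), h2⟩ : ZplusXQX) * q := by
    apply Subtype.ext
    rw [ZX_coe_mul]
    show (p:ℚ[X]) = ((2:ℤ):ℚ[X]) * (Polynomial.C (1/2 : ℚ) * (p:ℚ[X]))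
    push_cast
    rw [← mul_assoc, show (2:ℚ[X]) = C 2 from (map_ofNat C 2).symm, ← C_mul]
    norm_num
  rcases hp.isUnit_or_isUnit hpq with h | h
  · rcases (ZX_isUnit_iff _).mp h with h | h <;>
    · simp only at h
      have := congrArg (fun f => Polynomial.coeff f 0) h
      norm_num at this
  · rcases (ZX_isUnit_iff _).mp h with h | h <;>
    · have := congrArg (fun f => Polynomial.coeff f 0) h
      simp [hq, h0] at this

lemma ZX_measure (db dc M K t N : ℕ) (hM : 1 ≤ M) (h2 : 2 ≤ dc + K)
    (h1 : M ≤ t) (h2' : 2 ≤ K → 2*M ≤ t) (hN : db + dc + t ≤ N+1) : db + M ≤ N := by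
  rcases Nat.lt_or_ge K 2 with h | h
  · omega
  · have := h2' h; omega

lemma ZX_deg_zero_nonunit (x : ZplusXQX) (j : ℤ) (hj : (x:ℚ[X]).coeff 0 = (j:ℚ))
    (hj0 : j ≠ 0) (hux : ¬ IsUnit x) (hdx : (x:ℚ[X]).natDegree = 0) : 2 ≤ j.natAbs := by
  have hx : (x:ℚ[X]) = C ((j:ℚ)) := by rw [← hj]; exact eq_C_of_natDegree_eq_zero hdx
  have hne := (ZX_isUnit_iff x).not.mp hux
  push_neg at hne
  have h1 : j ≠ 1 := by rintro rfl; exact hne.1 (by rw [hx]; simp)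
  have h2 : j ≠ -1 := by rintro rfl; exact hne.2 (by rw [hx]; simp)
  omega

lemma ZX_exists_fact : ∀ N : ℕ, ∀ a : ZplusXQX, ∀ n : ℤ, (a:ℚ[X]).coeff 0 = (n:ℚ) →
    n ≠ 0 → ¬ IsUnit a → (a:ℚ[X]).natDegree + n.natAbs ≤ N →
    ∃ l : List ZplusXQX, l ≠ [] ∧ (∀ p ∈ l, Irreducible p) ∧ a = l.prod := by
  intro N
  induction N with
  | zero => intro a n hn hn0 _ hN; exact absurd (by omega : n = 0) hn0
  | succ N ih =>
    intro a n hn hn0 hu hN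
    by_cases hirr : Irreducible a
    · exact ⟨[a], by simp, by simp [hirr], by simp⟩
    · have hbc : ∃ b c : ZplusXQX, a = b * c ∧ ¬ IsUnit b ∧ ¬ IsUnit c := by
        by_contra hcon
        push_neg at hcon
        exact hirr ⟨hu, fun b c hbc => by
          by_contra h; push_neg at h
          exact h.2 (hcon b c hbc h.1)⟩
      obtain ⟨b, c, habc, hub, huc⟩ := hbc
      obtain ⟨m, hm⟩ := ZX_mem b
      obtain ⟨k, hk⟩ := ZX_mem c
      have hcoe : (a:ℚ[X]) = (b:ℚ[X]) * (c:ℚ[X]) := by rw [habc, ZX_coe_mul]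
      have hmk : (n:ℚ) = (m:ℚ) * (k:ℚ) := by
        rw [← hn, ← hm, ← hk, hcoe, mul_coeff_zero]
      have hmk' : n = m * k := by exact_mod_cast hmk
      have hm0 : m ≠ 0 := fun h => hn0 (by simp [hmk', h])
      have hk0 : k ≠ 0 := fun h => hn0 (by simp [hmk', h])
      have hb0 : (b:ℚ[X]) ≠ 0 := fun h => hm0 (by exact_mod_cast (by rw [← hm, h]; simp : (m:ℚ) = 0))
      have hc0 : (c:ℚ[X]) ≠ 0 := fun h => hk0 (by exact_mod_cast (by rw [← hk, h]; simp : (k:ℚ) = 0))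
      have hdeg : (a:ℚ[X]).natDegree = (b:ℚ[X]).natDegree + (c:ℚ[X]).natDegree := by
        rw [hcoe]; exact natDegree_mul hb0 hc0
      have habs : n.natAbs = m.natAbs * k.natAbs := by rw [hmk', Int.natAbs_mul]
      have hN' : (b:ℚ[X]).natDegree + (c:ℚ[X]).natDegree + m.natAbs * k.natAbs ≤ N + 1 := by
        rw [← hdeg, ← habs]; exact hN
      have hMb : 1 ≤ m.natAbs := by omega
      have hKc : 1 ≤ k.natAbs := by omega
      have h2c : 2 ≤ (c:ℚ[X]).natDegree + k.natAbs := by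
        rcases Nat.eq_zero_or_pos ((c:ℚ[X]).natDegree) with h | h
        · have := ZX_deg_zero_nonunit c k hk hk0 huc h; omega
        · omega
      have h2b : 2 ≤ (b:ℚ[X]).natDegree + m.natAbs := by
        rcases Nat.eq_zero_or_pos ((b:ℚ[X]).natDegree) with h | h
        · have := ZX_deg_zero_nonunit b m hm hm0 hub h; omega
        · omega
      have hμb : (b:ℚ[X]).natDegree + m.natAbs ≤ N :=
        ZX_measure _ ((c:ℚ[X]).natDegree) _ k.natAbs _ N hMb h2c
          (Nat.le_mul_of_pos_right _ (by omega))
          (fun h => by calc 2 * m.natAbs = m.natAbs * 2 := by ring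
                        _ ≤ m.natAbs * k.natAbs := Nat.mul_le_mul_left _ h) hN'
      have hμc : (c:ℚ[X]).natDegree + k.natAbs ≤ N :=
        ZX_measure _ ((b:ℚ[X]).natDegree) _ m.natAbs (m.natAbs * k.natAbs) N hKc h2b
          (Nat.le_mul_of_pos_left _ (by omega))
          (fun h => by calc 2 * k.natAbs = k.natAbs * 2 := by ring
                        _ ≤ k.natAbs * m.natAbs := Nat.mul_le_mul_left _ h
                        _ = m.natAbs * k.natAbs := mul_comm _ _)
          (by rw [show (c:ℚ[X]).natDegree + (b:ℚ[X]).natDegree = (b:ℚ[X]).natDegree + (c:ℚ[X]).natDegree from Nat.add_comm _ _]; exact hN')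
      obtain ⟨lb, hlb1, hlb2, hlb3⟩ := ih b m hm hm0 hub hμb
      obtain ⟨lc, hlc1, hlc2, hlc3⟩ := ih c k hk hk0 huc hμc
      refine ⟨lb ++ lc, by simp [hlb1], ?_, ?_⟩
      · intro p hp; rcases List.mem_append.mp hp with h | h
        · exact hlb2 p h
        · exact hlc2 p h
      · rw [List.prod_append, habc, hlb3, hlc3]

/-- In `D = ℤ + Xℚ[X]`, a nonzero nonunit `a` is a finite product of irreducible
elements of `D` iff `ord a = 0`, i.e. iff the constant coefficient of `a` is nonzero. -/
theorem ZplusXQX_atomic_iff_ord_zero (a : ZplusXQX) (ha : a ≠ 0) (hu : ¬ IsUnit a) :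
    ((∃ l : List ZplusXQX, l ≠ [] ∧ (∀ p ∈ l, Irreducible p) ∧ a = l.prod) ↔
        (a : Polynomial ℚ).natTrailingDegree = 0) ∧
      ((a : Polynomial ℚ).natTrailingDegree = 0 ↔ (a : Polynomial ℚ).coeff 0 ≠ 0) := by
  have hane : (a : ℚ[X]) ≠ 0 := fun h => ha (Subtype.ext h)
  have hiff : (a : ℚ[X]).natTrailingDegree = 0 ↔ (a : ℚ[X]).coeff 0 ≠ 0 := by
    rw [Polynomial.natTrailingDegree_eq_zero]
    exact ⟨fun h => h.resolve_left hane, Or.inr⟩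
  refine ⟨?_, hiff⟩
  rw [hiff]
  constructor
  · rintro ⟨l, hl1, hl2, hl3⟩
    set φ : ZplusXQX →+* ℚ := (Polynomial.evalRingHom (0:ℚ)).comp ZplusXQX.subtype with hφ
    have hφp : ∀ p : ZplusXQX, φ p = (p:ℚ[X]).coeff 0 := fun p => by
      simp [hφ, Polynomial.coeff_zero_eq_eval_zero]
    rw [← hφp, hl3, map_list_prod]
    intro h
    obtain ⟨p, hp, hp0⟩ := List.mem_map.mp (List.prod_eq_zero_iff.mp h)
    exact ZX_irred_coeff0 p (hl2 p hp) (by rw [← hφp]; exact hp0)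
  · intro h0
    obtain ⟨n, hn⟩ := ZX_mem a
    have hn0 : n ≠ 0 := fun h => h0 (by rw [hn, h]; simp)
    exact ZX_exists_fact ((a:ℚ[X]).natDegree + n.natAbs) a n hn hn0 hu le_rfl
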